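/- (Truncation Lemma) Let H be a bounded self-adjoint operator on a Hilbert space H, P an orthogonal projection with H̃ = PHP, and Φ a unit vector. Suppose for some T > 0, W ∈ {H, H̃}, N₀ ∈ ℕ, and δ > 0, one can write e^{−iWt}Φ = γ(t) + ε(t) for all 0 ≤ t ≤ T, where ‖ε(t)‖ ≤ δ and (1−P)H^r γ(t) = 0 for all r = 0,...,N₀−1. Then for all 0 ≤ t ≤ T, ‖(e^{−iHt} − e^{−iH̃t})Φ‖ ≤ (4e‖H‖t/N₀ + 2)(δ + 2^{−N₀}(1+δ)). -/

import Mathlib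

set_option maxHeartbeats 1000000

open Complex NormedSpace
open scoped Nat

section TruncationAux
variable {E : Type*} [NormedAddCommGroup E] [InnerProductSpace ℂ E] [CompleteSpace E]

lemma skew_mem (B : E →L[ℂ] E) (hB : IsSelfAdjoint B) (t : ℝ) :
    ((-(t:ℂ) * I) • B) ∈ skewAdjoint (E →L[ℂ] E) := by
  rw [skewAdjoint.mem_iff, star_smul, hB.star_eq]
  have : star (-(t:ℂ) * I) = -(-(t:ℂ) * I) := by
    simp [Complex.ext_iff]
  rw [this, neg_smul]

lemma exp_isometry (B : E →L[ℂ] E) (hB : IsSelfAdjoint B) (t : ℝ) (x : E) :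
    ‖NormedSpace.exp ((-(t:ℂ) * I) • B) x‖ = ‖x‖ := by
  letI : NormedAlgebra ℚ (E →L[ℂ] E) := NormedAlgebra.restrictScalars ℚ ℂ (E →L[ℂ] E)
  have hu := exp_mem_unitary_of_mem_skewAdjoint (skew_mem B hB t)
  set u := NormedSpace.exp ((-(t:ℂ) * I) • B) with hu_def
  have h1 : star u * u = 1 := (Unitary.mem_iff.mp hu).1
  have key : (inner ℂ (u x) (u x) : ℂ) = inner ℂ x x := by
    calc (inner ℂ (u x) (u x) : ℂ)
        = inner ℂ ((ContinuousLinearMap.adjoint u) (u x)) x :=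
          (ContinuousLinearMap.adjoint_inner_left u x (u x)).symm
      _ = inner ℂ ((star u * u) x) x := by
          rw [ContinuousLinearMap.star_eq_adjoint]; rfl
      _ = inner ℂ x x := by rw [h1]; rfl
  have h2 : ‖u x‖ ^ 2 = ‖x‖ ^ 2 := by
    have := congrArg (fun z : ℂ => RCLike.re z) key
    rwa [inner_self_eq_norm_sq, inner_self_eq_norm_sq] at this
  calc ‖u x‖ = √(‖u x‖ ^ 2) := (Real.sqrt_sq (norm_nonneg _)).symm
    _ = √(‖x‖ ^ 2) := by rw [h2]
    _ = ‖x‖ := Real.sqrt_sq (norm_nonneg _)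


lemma exp_split (B : E →L[ℂ] E) (a b : ℝ) :
    NormedSpace.exp ((-(((a + b : ℝ)):ℂ) * I) • B)
      = NormedSpace.exp ((-(a:ℂ) * I) • B) * NormedSpace.exp ((-(b:ℂ) * I) • B) := by
  letI : NormedAlgebra ℚ (E →L[ℂ] E) := NormedAlgebra.restrictScalars ℚ ℂ (E →L[ℂ] E)
  rw [← exp_add_of_commute (((Commute.refl B).smul_left (-(a:ℂ) * I)).smul_right (-(b:ℂ) * I))]
  congr 1
  rw [← add_smul]
  congr 1
  push_cast
  ring

lemma proj_contraction (P : E →L[ℂ] E) (hPidem : IsIdempotentElem P)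
    (hPsa : IsSelfAdjoint P) (x : E) : ‖P x‖ ≤ ‖x‖ := by
  rcases eq_or_lt_of_le (norm_nonneg (P x)) with h0 | h0
  · rw [← h0]; exact norm_nonneg x
  have key : (inner ℂ (P x) (P x) : ℂ) = inner ℂ x (P x) := by
    calc (inner ℂ (P x) (P x) : ℂ)
        = inner ℂ ((ContinuousLinearMap.adjoint P) (P x)) x := by
          rw [ContinuousLinearMap.adjoint_inner_left]
      _ = inner ℂ ((P * P) x) x := by
          have : ContinuousLinearMap.adjoint P = P := by
            rw [← ContinuousLinearMap.star_eq_adjoint, hPsa.star_eq]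
          rw [this]; rfl
      _ = inner ℂ (P x) x := by rw [hPidem]
      _ = inner ℂ x (P x) := by
          rw [← ContinuousLinearMap.adjoint_inner_right]
          rw [← ContinuousLinearMap.star_eq_adjoint, hPsa.star_eq]
  have h1 : ‖P x‖ ^ 2 = RCLike.re (inner ℂ x (P x) : ℂ) := by
    rw [← key, inner_self_eq_norm_sq]
  have h2 : RCLike.re (inner ℂ x (P x) : ℂ) ≤ ‖x‖ * ‖P x‖ := by
    calc RCLike.re (inner ℂ x (P x) : ℂ) ≤ ‖(inner ℂ x (P x) : ℂ)‖ := RCLike.re_le_norm _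
      _ ≤ ‖x‖ * ‖P x‖ := norm_inner_le_norm x (P x)
  nlinarith [h0]


lemma PAP_selfAdjoint (A P : E →L[ℂ] E) (hA : IsSelfAdjoint A) (hPsa : IsSelfAdjoint P) :
    IsSelfAdjoint (P ∘L A ∘L P) := by
  have h := hA.conjugate P
  rw [hPsa.star_eq] at h
  have : P ∘L A ∘L P = P * A * P := rfl
  rwa [this]

lemma PAP_norm_le (A P : E →L[ℂ] E) (hPidem : IsIdempotentElem P)
    (hPsa : IsSelfAdjoint P) : ‖P ∘L A ∘L P‖ ≤ ‖A‖ := by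
  refine ContinuousLinearMap.opNorm_le_bound _ (norm_nonneg A) fun x => ?_
  calc ‖(P ∘L A ∘L P) x‖ = ‖P (A (P x))‖ := rfl
    _ ≤ ‖A (P x)‖ := proj_contraction P hPidem hPsa _
    _ ≤ ‖A‖ * ‖P x‖ := A.le_opNorm _
    _ ≤ ‖A‖ * ‖x‖ := by
        have := proj_contraction P hPidem hPsa x
        exact mul_le_mul_of_nonneg_left this (norm_nonneg A)


lemma exp_taylor (B : E →L[ℂ] E) (c : ℂ) (N : ℕ) (hN : 1 ≤ N) (R : ℝ) (hR : ‖B‖ ≤ R) :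
    ‖NormedSpace.exp (c • B) - ∑ k ∈ Finset.range N, (((k ! : ℂ))⁻¹ * c ^ k) • B ^ k‖ ≤
      ∑' j : ℕ, (‖c‖ * R) ^ (j + N) / (j + N)! := by
  have hR0 : 0 ≤ R := (norm_nonneg B).trans hR
  set f : ℕ → (E →L[ℂ] E) := fun k => (((k ! : ℂ))⁻¹ * c ^ k) • B ^ k with hf
  have hfk : ∀ k : ℕ, ((k ! : ℂ))⁻¹ • (c • B) ^ k = f k := by
    intro k
    rw [smul_pow, smul_smul]
  have hnormsum : Summable (fun k => ‖f k‖) := by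
    have := norm_expSeries_summable' (𝕂 := ℂ) (c • B)
    exact this.congr (fun k => by rw [hfk])
  have hsum : Summable f := by
    have := expSeries_summable' (𝕂 := ℂ) (c • B)
    exact this.congr hfk
  have hexp : NormedSpace.exp (c • B) = ∑' k : ℕ, f k := by
    rw [exp_eq_tsum ℂ]
    exact tsum_congr hfk
  have hsplit : NormedSpace.exp (c • B) - ∑ k ∈ Finset.range N, f k = ∑' j : ℕ, f (j + N) := by
    rw [hexp]
    exact (eq_sub_of_add_eq ((add_comm _ _).trans (hsum.sum_add_tsum_nat_add N))).symm
  rw [hsplit]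
  have hnorm : ∀ j : ℕ, ‖f (j + N)‖ ≤ (‖c‖ * R) ^ (j + N) / (j + N)! := by
    intro j
    have hpos : 0 < j + N := by omega
    calc ‖f (j + N)‖ = ‖(((j + N)! : ℂ))⁻¹ * c ^ (j + N)‖ * ‖B ^ (j + N)‖ := norm_smul _ _
      _ ≤ (((j + N)! : ℝ))⁻¹ * ‖c‖ ^ (j + N) * ‖B‖ ^ (j + N) := by
          apply mul_le_mul _ (norm_pow_le' B hpos) (norm_nonneg _) (by positivity)
          rw [norm_mul, norm_inv, norm_pow]
          apply le_of_eq
          congr 1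
          simp [Complex.norm_natCast]
      _ ≤ (((j + N)! : ℝ))⁻¹ * ‖c‖ ^ (j + N) * R ^ (j + N) := by
          gcongr
      _ = (‖c‖ * R) ^ (j + N) / (j + N)! := by
          rw [mul_pow]
          ring
  have hsumR : Summable (fun j : ℕ => (‖c‖ * R) ^ (j + N) / (j + N)!) := by
    have := Real.summable_pow_div_factorial (‖c‖ * R)
    exact ((summable_nat_add_iff N).mpr this).congr (fun j => by norm_num)
  calc ‖∑' j : ℕ, f (j + N)‖ ≤ ∑' j : ℕ, ‖f (j + N)‖ := by
        exact norm_tsum_le_tsum_norm ((summable_nat_add_iff N).mpr hnormsum)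
    _ ≤ ∑' j : ℕ, (‖c‖ * R) ^ (j + N) / (j + N)! := by
        exact Summable.tsum_le_tsum hnorm ((summable_nat_add_iff N).mpr hnormsum) hsumR

lemma telescope (B C : E →L[ℂ] E) (hC : IsSelfAdjoint C) (Φ : E) (n : ℕ) (h t : ℝ)
    (hth : t = n * h) :
    ‖NormedSpace.exp ((-(t:ℂ) * I) • B) Φ - NormedSpace.exp ((-(t:ℂ) * I) • C) Φ‖ ≤
      ∑ j ∈ Finset.range n,
        ‖NormedSpace.exp ((-(h:ℂ) * I) • B) (NormedSpace.exp ((-((j * h : ℝ):ℂ) * I) • B) Φ)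
          - NormedSpace.exp ((-(h:ℂ) * I) • C) (NormedSpace.exp ((-((j * h : ℝ):ℂ) * I) • B) Φ)‖ := by
  set u : ℝ → (E →L[ℂ] E) → (E →L[ℂ] E) := fun s D => NormedSpace.exp ((-(s:ℂ) * I) • D) with hu
  have hu0 : ∀ D : E →L[ℂ] E, u 0 D = 1 := by
    intro D
    show NormedSpace.exp ((-((0:ℝ):ℂ) * I) • D) = 1
    rw [show ((-((0:ℝ):ℂ)) * I) • D = 0 by norm_num, NormedSpace.exp_zero]
  have husplit : ∀ (D : E →L[ℂ] E) (a b : ℝ), u (a + b) D = u a D * u b D :=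
    fun D a b => exp_split D a b
  set F : ℕ → E := fun j => u (t - j * h) C (u (j * h) B Φ) with hF
  have hF0 : F 0 = NormedSpace.exp ((-(t:ℂ) * I) • C) Φ := by
    show u (t - (0:ℕ) * h) C (u ((0:ℕ) * h) B Φ) = _
    rw [show ((0:ℕ):ℝ) * h = 0 by norm_num, hu0, sub_zero]
    rfl
  have hFn : F n = NormedSpace.exp ((-(t:ℂ) * I) • B) Φ := by
    show u (t - n * h) C (u (n * h) B Φ) = _
    rw [← hth, sub_self, hu0]
    rfl
  have hdiff : ∀ j : ℕ,
      F (j + 1) - F j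
        = u (t - (j * h + h)) C (u h B (u (j * h) B Φ) - u h C (u (j * h) B Φ)) := by
    intro j
    have hcast : ((j + 1 : ℕ):ℝ) * h = (j:ℝ) * h + h := by push_cast; ring
    have hFj1 : F (j + 1) = u (t - (j * h + h)) C (u h B (u (j * h) B Φ)) := by
      show u (t - ((j + 1 : ℕ):ℝ) * h) C (u (((j + 1 : ℕ):ℝ) * h) B Φ) = _
      rw [hcast, show ((j:ℝ) * h + h) = h + (j:ℝ) * h by ring, husplit]
      rw [show t - (h + (j:ℝ) * h) = t - ((j:ℝ) * h + h) by ring]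
      rfl
    have hFj : F j = u (t - (j * h + h)) C (u h C (u (j * h) B Φ)) := by
      show u (t - (j:ℝ) * h) C (u ((j:ℝ) * h) B Φ) = _
      rw [show t - (j:ℝ) * h = (t - ((j:ℝ) * h + h)) + h by ring, husplit]
      rfl
    rw [hFj1, hFj, ← map_sub]
  have key : NormedSpace.exp ((-(t:ℂ) * I) • B) Φ - NormedSpace.exp ((-(t:ℂ) * I) • C) Φ
      = ∑ j ∈ Finset.range n, (F (j + 1) - F j) := by
    rw [Finset.sum_range_sub F, hF0, hFn]
  rw [key]
  refine (norm_sum_le _ _).trans ?_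
  apply Finset.sum_le_sum
  intro j _
  rw [hdiff j]
  exact le_of_eq (exp_isometry C hC (t - ((j:ℝ) * h + h))
    (u h B (u ((j:ℝ) * h) B Φ) - u h C (u ((j:ℝ) * h) B Φ)))

lemma pow_agree (A P : E →L[ℂ] E) (N : ℕ) (x : E)
    (hx : ∀ r < N, P ((A ^ r) x) = (A ^ r) x) :
    ∀ k < N, ((P ∘L A ∘L P) ^ k) x = (A ^ k) x := by
  intro k hk
  induction k with
  | zero => simp
  | succ m ih =>
    have hm : m < N := by omega
    have ihm := ih hm
    rw [pow_succ', pow_succ']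
    calc (P ∘L A ∘L P) (((P ∘L A ∘L P) ^ m) x)
        = P (A (P ((A ^ m) x))) := by rw [ihm]; rfl
      _ = P (A ((A ^ m) x)) := by rw [hx m hm]
      _ = P ((A ^ (m + 1)) x) := by rw [pow_succ']; rfl
      _ = (A ^ (m + 1)) x := hx (m + 1) hk
      _ = A (((A ^ m)) x) := by rw [pow_succ']; rfl

lemma segment_bound (A P : E →L[ℂ] E) (hPidem : IsIdempotentElem P)
    (hPsa : IsSelfAdjoint P) (N : ℕ) (hN : 1 ≤ N) (h : ℝ) (x : E)
    (hx : ∀ r < N, P ((A ^ r) x) = (A ^ r) x) :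
    ‖NormedSpace.exp ((-(h:ℂ) * I) • A) x - NormedSpace.exp ((-(h:ℂ) * I) • (P ∘L A ∘L P)) x‖ ≤
      2 * (∑' j : ℕ, (|h| * ‖A‖) ^ (j + N) / (j + N)!) * ‖x‖ := by
  set c : ℂ := -(h:ℂ) * I with hc
  have hcnorm : ‖c‖ = |h| := by
    rw [hc, norm_mul, norm_neg, Complex.norm_I, mul_one, Complex.norm_real]
    rfl
  set S : E := ∑ k ∈ Finset.range N, (((k ! : ℂ))⁻¹ * c ^ k) • ((A ^ k) x) with hS
  have hA_taylor : ‖NormedSpace.exp (c • A) x - S‖ ≤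
      (∑' j : ℕ, (|h| * ‖A‖) ^ (j + N) / (j + N)!) * ‖x‖ := by
    have h1 := exp_taylor A c N hN ‖A‖ le_rfl
    rw [hcnorm] at h1
    have h2 : (∑ k ∈ Finset.range N, (((k ! : ℂ))⁻¹ * c ^ k) • A ^ k) x = S := by
      rw [ContinuousLinearMap.sum_apply]
      exact Finset.sum_congr rfl (fun k _ => ContinuousLinearMap.smul_apply _ _ _)
    calc ‖NormedSpace.exp (c • A) x - S‖
        = ‖(NormedSpace.exp (c • A) - ∑ k ∈ Finset.range N, (((k ! : ℂ))⁻¹ * c ^ k) • A ^ k) x‖ := by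
          rw [ContinuousLinearMap.sub_apply, h2]
      _ ≤ ‖NormedSpace.exp (c • A) - ∑ k ∈ Finset.range N, (((k ! : ℂ))⁻¹ * c ^ k) • A ^ k‖ * ‖x‖ :=
          ContinuousLinearMap.le_opNorm _ _
      _ ≤ (∑' j : ℕ, (|h| * ‖A‖) ^ (j + N) / (j + N)!) * ‖x‖ := by
          exact mul_le_mul_of_nonneg_right h1 (norm_nonneg x)
  have hPAP_taylor : ‖NormedSpace.exp (c • (P ∘L A ∘L P)) x - S‖ ≤
      (∑' j : ℕ, (|h| * ‖A‖) ^ (j + N) / (j + N)!) * ‖x‖ := by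
    have h1 := exp_taylor (P ∘L A ∘L P) c N hN ‖A‖ (PAP_norm_le A P hPidem hPsa)
    rw [hcnorm] at h1
    have h2 : (∑ k ∈ Finset.range N, (((k ! : ℂ))⁻¹ * c ^ k) • (P ∘L A ∘L P) ^ k) x = S := by
      rw [ContinuousLinearMap.sum_apply]
      apply Finset.sum_congr rfl
      intro k hk
      rw [ContinuousLinearMap.smul_apply, pow_agree A P N x hx k (Finset.mem_range.mp hk)]
    calc ‖NormedSpace.exp (c • (P ∘L A ∘L P)) x - S‖
        = ‖(NormedSpace.exp (c • (P ∘L A ∘L P))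
            - ∑ k ∈ Finset.range N, (((k ! : ℂ))⁻¹ * c ^ k) • (P ∘L A ∘L P) ^ k) x‖ := by
          rw [ContinuousLinearMap.sub_apply, h2]
      _ ≤ ‖NormedSpace.exp (c • (P ∘L A ∘L P))
            - ∑ k ∈ Finset.range N, (((k ! : ℂ))⁻¹ * c ^ k) • (P ∘L A ∘L P) ^ k‖ * ‖x‖ :=
          ContinuousLinearMap.le_opNorm _ _
      _ ≤ (∑' j : ℕ, (|h| * ‖A‖) ^ (j + N) / (j + N)!) * ‖x‖ :=
          mul_le_mul_of_nonneg_right h1 (norm_nonneg x)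
  calc ‖NormedSpace.exp (c • A) x - NormedSpace.exp (c • (P ∘L A ∘L P)) x‖
      ≤ ‖NormedSpace.exp (c • A) x - S‖ + ‖S - NormedSpace.exp (c • (P ∘L A ∘L P)) x‖ := norm_sub_le_norm_sub_add_norm_sub _ _ _
    _ ≤ (∑' j : ℕ, (|h| * ‖A‖) ^ (j + N) / (j + N)!) * ‖x‖
        + (∑' j : ℕ, (|h| * ‖A‖) ^ (j + N) / (j + N)!) * ‖x‖ := by
        apply add_le_add hA_taylor
        rw [norm_sub_rev]
        exact hPAP_taylor
    _ = 2 * (∑' j : ℕ, (|h| * ‖A‖) ^ (j + N) / (j + N)!) * ‖x‖ := by ring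

end TruncationAux

lemma fact_bound : ∀ N : ℕ, 1 ≤ N → Real.exp 1 * (N:ℝ) ^ N ≤ (N ! : ℝ) * Real.exp 1 ^ N := by
  intro N hN
  induction N with
  | zero => omega
  | succ n ih =>
    rcases Nat.eq_zero_or_pos n with h0 | h0
    · subst h0; simp [Nat.factorial]
    · have ihn := ih h0
      have hn0 : (0:ℝ) < n := by exact_mod_cast h0
      have key : ((n:ℝ) + 1) ^ n ≤ (n:ℝ) ^ n * Real.exp 1 := by
        have h1 : (n:ℝ) + 1 ≤ (n:ℝ) * Real.exp (1 / n) := by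
          have h2 := Real.add_one_le_exp (1 / (n:ℝ))
          calc (n:ℝ) + 1 = (n:ℝ) * (1 / n + 1) := by field_simp; ring
            _ ≤ (n:ℝ) * Real.exp (1 / n) := mul_le_mul_of_nonneg_left h2 hn0.le
        calc ((n:ℝ) + 1) ^ n ≤ ((n:ℝ) * Real.exp (1 / n)) ^ n := by
              apply pow_le_pow_left₀ (by positivity) h1 _
          _ = (n:ℝ) ^ n * Real.exp (1 / n) ^ n := mul_pow _ _ _
          _ = (n:ℝ) ^ n * Real.exp 1 := by
              rw [← Real.exp_nat_mul]
              congr 1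
              field_simp
      have hfact : ((n+1)! : ℝ) = ((n:ℝ) + 1) * (n ! : ℝ) := by
        rw [Nat.factorial_succ]; push_cast; ring
      have he : (0:ℝ) < Real.exp 1 := Real.exp_pos 1
      calc Real.exp 1 * ((n+1 : ℕ):ℝ) ^ (n+1)
          = ((n:ℝ) + 1) * (Real.exp 1 * ((n:ℝ) + 1) ^ n) := by push_cast; ring
        _ ≤ ((n:ℝ) + 1) * (Real.exp 1 * ((n:ℝ) ^ n * Real.exp 1)) := by
            apply mul_le_mul_of_nonneg_left _ (by positivity)
            exact mul_le_mul_of_nonneg_left key he.le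
        _ = ((n:ℝ) + 1) * (Real.exp 1 * (n:ℝ) ^ n) * Real.exp 1 := by ring
        _ ≤ ((n:ℝ) + 1) * ((n ! : ℝ) * Real.exp 1 ^ n) * Real.exp 1 := by
            apply mul_le_mul_of_nonneg_right _ he.le
            exact mul_le_mul_of_nonneg_left ihn (by positivity)
        _ = ((n+1)! : ℝ) * Real.exp 1 ^ (n+1) := by rw [hfact]; push_cast; ring

lemma tail_le (N : ℕ) (hN : 1 ≤ N) (a : ℝ) (ha : 0 ≤ a)
    (hbound : a * (2 * Real.exp 1) ≤ N) :
    ∑' j : ℕ, a ^ (j + N) / (j + N)! ≤ (2:ℝ)⁻¹ ^ N := by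
  have he : (0:ℝ) < Real.exp 1 := Real.exp_pos 1
  have he2 : (2:ℝ) ≤ Real.exp 1 := by
    have := Real.add_one_le_exp (1:ℝ); linarith
  set q : ℝ := (2 * Real.exp 1)⁻¹ with hq
  have hq0 : 0 ≤ q := by positivity
  have hq1 : q < 1 := by
    rw [hq, inv_lt_one_iff₀]; right; linarith
  have hNfac : (0:ℝ) < (N ! : ℝ) := by exact_mod_cast Nat.factorial_pos N
  -- termwise bound
  have key : ∀ j : ℕ, a ^ (j + N) / (j + N)! ≤ (a ^ N / N !) * q ^ j := by
    intro j
    have hfac : ((N ! : ℕ) : ℝ) * ((N:ℝ) + 1) ^ j ≤ ((N + j)! : ℝ) := by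
      exact_mod_cast Nat.factorial_mul_pow_le_factorial (m := N) (n := j)
    have haN1 : a ≤ ((N:ℝ) + 1) * q := by
      rw [hq]
      rw [le_mul_inv_iff₀ (by linarith)]
      calc a * (2 * Real.exp 1) ≤ (N:ℝ) := hbound
        _ ≤ (N:ℝ) + 1 := by linarith
    have hstep : a ^ j ≤ (((N:ℝ) + 1) * q) ^ j := pow_le_pow_left₀ ha haN1 j
    calc a ^ (j + N) / (j + N)!
        = a ^ N * a ^ j / ((N + j)! : ℝ) := by
          rw [← pow_add]; rw [Nat.add_comm j N]
      _ ≤ a ^ N * (((N:ℝ) + 1) * q) ^ j / ((N ! : ℝ) * ((N:ℝ) + 1) ^ j) := by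
          apply div_le_div₀ (by positivity) _ (by positivity) hfac
          exact mul_le_mul_of_nonneg_left hstep (by positivity)
      _ = (a ^ N / N !) * q ^ j := by
          rw [mul_pow]
          field_simp
  have hsum1 : Summable (fun j : ℕ => a ^ (j + N) / (j + N)!) := by
    have := Real.summable_pow_div_factorial a
    exact (summable_nat_add_iff N).mpr this |>.congr (fun j => by norm_num)
  have hsum2 : Summable (fun j : ℕ => (a ^ N / N !) * q ^ j) :=
    (summable_geometric_of_lt_one hq0 hq1).mul_left _
  have h1 : ∑' j : ℕ, a ^ (j + N) / (j + N)! ≤ ∑' j : ℕ, (a ^ N / N !) * q ^ j :=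
    Summable.tsum_le_tsum key hsum1 hsum2
  have h2 : ∑' j : ℕ, (a ^ N / N !) * q ^ j = (a ^ N / N !) * (1 - q)⁻¹ := by
    rw [tsum_mul_left, tsum_geometric_of_lt_one hq0 hq1]
  -- final numeric bound
  have hq4 : q ≤ 4⁻¹ := by
    rw [hq]
    apply inv_anti₀ (by norm_num) (by linarith)
  have hinv : (1 - q)⁻¹ ≤ 4 / 3 := by
    rw [inv_le_iff_one_le_mul₀ (by linarith)]
    linarith
  have haN : a ^ N / N ! ≤ (2:ℝ)⁻¹ ^ N / 2 := by
    have ha1 : a ≤ (N:ℝ) / (2 * Real.exp 1) := by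
      rw [le_div_iff₀ (by linarith)]; exact hbound
    have step1 : a ^ N ≤ ((N:ℝ) / (2 * Real.exp 1)) ^ N := pow_le_pow_left₀ ha ha1 N
    have step2 : ((N:ℝ) / (2 * Real.exp 1)) ^ N = (N:ℝ) ^ N / (2 ^ N * Real.exp 1 ^ N) := by
      rw [div_pow, mul_pow]
    have step3 : (N:ℝ) ^ N ≤ (N ! : ℝ) * Real.exp 1 ^ N / Real.exp 1 := by
      rw [le_div_iff₀ he]
      calc (N:ℝ) ^ N * Real.exp 1 = Real.exp 1 * (N:ℝ) ^ N := by ring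
        _ ≤ (N ! : ℝ) * Real.exp 1 ^ N := fact_bound N hN
    calc a ^ N / N ! ≤ ((N:ℝ) ^ N / (2 ^ N * Real.exp 1 ^ N)) / N ! := by
          rw [← step2]; gcongr
      _ ≤ (((N ! : ℝ) * Real.exp 1 ^ N / Real.exp 1) / (2 ^ N * Real.exp 1 ^ N)) / N ! := by
          gcongr
      _ = (2:ℝ)⁻¹ ^ N / Real.exp 1 := by
          rw [inv_pow]
          field_simp
      _ ≤ (2:ℝ)⁻¹ ^ N / 2 := by
          apply div_le_div_of_nonneg_left (by positivity) (by norm_num) he2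
  calc ∑' j : ℕ, a ^ (j + N) / (j + N)! ≤ (a ^ N / N !) * (1 - q)⁻¹ := h1.trans_eq h2
    _ ≤ ((2:ℝ)⁻¹ ^ N / 2) * (4 / 3) := by
        exact mul_le_mul haN hinv (by rw [inv_nonneg]; linarith) (by positivity)
    _ ≤ (2:ℝ)⁻¹ ^ N := by
        rw [div_mul_eq_mul_div, mul_div_assoc]
        nlinarith [pow_pos (by norm_num : (0:ℝ) < 2⁻¹) N]

/-- The Truncation Lemma. -/
theorem truncation_lemma {E : Type*} [NormedAddCommGroup E]
    [InnerProductSpace ℂ E] [CompleteSpace E]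
    (A P : E →L[ℂ] E) (hA : IsSelfAdjoint A)
    (hPidem : IsIdempotentElem P) (hPsa : IsSelfAdjoint P)
    (Φ : E) (hΦ : ‖Φ‖ = 1)
    (T : ℝ) (hT : 0 < T) (W : E →L[ℂ] E)
    (hW : W = A ∨ W = P ∘L A ∘L P)
    (N₀ : ℕ) (δ : ℝ) (hδ : 0 < δ)
    (γ ε : ℝ → E)
    (hdecomp : ∀ t, 0 ≤ t → t ≤ T →
      NormedSpace.exp ((-(t : ℂ) * Complex.I) • W) Φ = γ t + ε t)
    (hε : ∀ t, 0 ≤ t → t ≤ T → ‖ε t‖ ≤ δ)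
    (hγ : ∀ t, 0 ≤ t → t ≤ T → ∀ r < N₀, ((1 - P) ∘L A ^ r) (γ t) = 0) :
    ∀ t, 0 ≤ t → t ≤ T →
      ‖NormedSpace.exp ((-(t : ℂ) * Complex.I) • A) Φ -
          NormedSpace.exp ((-(t : ℂ) * Complex.I) • (P ∘L A ∘L P)) Φ‖ ≤
        (4 * Real.exp 1 * ‖A‖ * t / N₀ + 2) * (δ + 2 ^ (-(N₀ : ℝ)) * (1 + δ)) := by
  intro t ht htT
  have hPAPsa : IsSelfAdjoint (P ∘L A ∘L P) := PAP_selfAdjoint A P hA hPsa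
  have hWsa : IsSelfAdjoint W := by rcases hW with h | h <;> rw [h] <;> [exact hA; exact hPAPsa]
  have he : (0:ℝ) < Real.exp 1 := Real.exp_pos 1
  have hqr : (2:ℝ) ^ (-(N₀ : ℝ)) = (2:ℝ)⁻¹ ^ N₀ := by
    rw [Real.rpow_neg (by norm_num : (0:ℝ) ≤ 2), Real.rpow_natCast, ← inv_pow]
  rw [hqr]
  set q : ℝ := (2:ℝ)⁻¹ ^ N₀ with hqdef
  have hq0 : 0 < q := by positivity
  -- trivial bound when N₀ = 0
  rcases Nat.eq_zero_or_pos N₀ with hN0 | hN0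
  · subst hN0
    have h1 : ‖NormedSpace.exp ((-(t : ℂ) * Complex.I) • A) Φ -
        NormedSpace.exp ((-(t : ℂ) * Complex.I) • (P ∘L A ∘L P)) Φ‖ ≤ 2 := by
      refine (norm_sub_le _ _).trans ?_
      rw [exp_isometry A hA t Φ, exp_isometry _ hPAPsa t Φ, hΦ]
      norm_num
    refine h1.trans ?_
    have : ((0:ℕ):ℝ) = 0 := by norm_num
    rw [this, div_zero, zero_add]
    have : q = 1 := by rw [hqdef]; norm_num
    rw [this]
    nlinarith
  -- main case
  have hN : 1 ≤ N₀ := hN0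
  have hN₀pos : (0:ℝ) < N₀ := by exact_mod_cast hN0
  set arg : ℝ := 2 * Real.exp 1 * ‖A‖ * t / N₀ with harg
  have harg0 : 0 ≤ arg := by positivity
  set n : ℕ := max 1 ⌈arg⌉₊ with hn
  have hn1 : 1 ≤ n := le_max_left _ _
  have hnpos : (0:ℝ) < n := by exact_mod_cast hn1
  set h : ℝ := t / n with hh
  have hh0 : 0 ≤ h := by positivity
  have hth : t = n * h := by rw [hh]; field_simp [hnpos.ne']
  have habs : |h| = h := abs_of_nonneg hh0
  have hargn : arg ≤ n := by
    calc arg ≤ (⌈arg⌉₊ : ℝ) := Nat.le_ceil arg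
      _ ≤ (n : ℝ) := by exact_mod_cast le_max_right 1 ⌈arg⌉₊
  have hbound : (|h| * ‖A‖) * (2 * Real.exp 1) ≤ N₀ := by
    rw [habs, hh]
    rw [div_mul_eq_mul_div, div_mul_eq_mul_div, div_le_iff₀ hnpos]
    have h2 : arg * (N₀:ℝ) ≤ n * (N₀:ℝ) :=
      mul_le_mul_of_nonneg_right hargn hN₀pos.le
    rw [harg, div_mul_cancel₀ _ hN₀pos.ne'] at h2
    nlinarith
  set tail : ℝ := ∑' j : ℕ, (|h| * ‖A‖) ^ (j + N₀) / (j + N₀)! with htaildef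
  have htail_nonneg : 0 ≤ tail := tsum_nonneg (fun j => by positivity)
  have htail : tail ≤ q := tail_le N₀ hN (|h| * ‖A‖) (by positivity) hbound
  -- per-term bound
  have hterm : ∀ j : ℕ, j < n →
      ‖NormedSpace.exp ((-((j * h : ℝ):ℂ) * Complex.I) • W) Φ‖ = 1 ∧
      (0 ≤ (j:ℝ) * h ∧ (j:ℝ) * h ≤ T) := by
    intro j hj
    constructor
    · rw [exp_isometry W hWsa ((j:ℝ) * h) Φ, hΦ]
    constructor
    · positivity
    · have h1 : (j:ℝ) * h ≤ t := by
        rw [hth]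
        apply mul_le_mul_of_nonneg_right _ hh0
        exact_mod_cast hj.le
      exact h1.trans htT
  have key : ∀ j : ℕ, j < n →
      ‖NormedSpace.exp ((-(h:ℂ) * Complex.I) • A)
          (NormedSpace.exp ((-((j * h : ℝ):ℂ) * Complex.I) • W) Φ)
        - NormedSpace.exp ((-(h:ℂ) * Complex.I) • (P ∘L A ∘L P))
          (NormedSpace.exp ((-((j * h : ℝ):ℂ) * Complex.I) • W) Φ)‖
        ≤ 2 * q * (1 + δ) + 2 * δ := by
    intro j hj
    obtain ⟨hXnorm, hjh0, hjhT⟩ := hterm j hj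
    have hX := hdecomp ((j:ℝ) * h) hjh0 hjhT
    set g : E := γ ((j:ℝ) * h) with hg
    set e : E := ε ((j:ℝ) * h) with hedef
    have hgP : ∀ r < N₀, P ((A ^ r) g) = (A ^ r) g := by
      intro r hr
      have := hγ ((j:ℝ) * h) hjh0 hjhT r hr
      rw [ContinuousLinearMap.comp_apply, ContinuousLinearMap.sub_apply,
        ContinuousLinearMap.one_apply] at this
      have := sub_eq_zero.mp this
      exact this.symm
    have hgnorm : ‖g‖ ≤ 1 + δ := by
      have : g = (g + e) - e := by abel
      rw [this]
      refine (norm_sub_le _ _).trans ?_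
      rw [← hX, hXnorm]
      exact add_le_add_right (hε _ hjh0 hjhT) 1
    have henorm : ‖e‖ ≤ δ := hε _ hjh0 hjhT
    rw [hX]
    have expand : ∀ D : E →L[ℂ] E,
        NormedSpace.exp ((-(h:ℂ) * Complex.I) • D) (g + e)
          = NormedSpace.exp ((-(h:ℂ) * Complex.I) • D) g
            + NormedSpace.exp ((-(h:ℂ) * Complex.I) • D) e :=
      fun D => map_add _ g e
    rw [expand A, expand (P ∘L A ∘L P)]
    have seg := segment_bound A P hPidem hPsa N₀ hN h g hgP
    calc ‖NormedSpace.exp ((-(h:ℂ) * Complex.I) • A) g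
          + NormedSpace.exp ((-(h:ℂ) * Complex.I) • A) e
          - (NormedSpace.exp ((-(h:ℂ) * Complex.I) • (P ∘L A ∘L P)) g
            + NormedSpace.exp ((-(h:ℂ) * Complex.I) • (P ∘L A ∘L P)) e)‖
        ≤ ‖NormedSpace.exp ((-(h:ℂ) * Complex.I) • A) g
            - NormedSpace.exp ((-(h:ℂ) * Complex.I) • (P ∘L A ∘L P)) g‖
          + (‖NormedSpace.exp ((-(h:ℂ) * Complex.I) • A) e‖
            + ‖NormedSpace.exp ((-(h:ℂ) * Complex.I) • (P ∘L A ∘L P)) e‖) := by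
          have : NormedSpace.exp ((-(h:ℂ) * Complex.I) • A) g
              + NormedSpace.exp ((-(h:ℂ) * Complex.I) • A) e
              - (NormedSpace.exp ((-(h:ℂ) * Complex.I) • (P ∘L A ∘L P)) g
                + NormedSpace.exp ((-(h:ℂ) * Complex.I) • (P ∘L A ∘L P)) e)
              = (NormedSpace.exp ((-(h:ℂ) * Complex.I) • A) g
                - NormedSpace.exp ((-(h:ℂ) * Complex.I) • (P ∘L A ∘L P)) g)
                + (NormedSpace.exp ((-(h:ℂ) * Complex.I) • A) e
                - NormedSpace.exp ((-(h:ℂ) * Complex.I) • (P ∘L A ∘L P)) e) := by abel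
          rw [this]
          exact (norm_add_le _ _).trans (add_le_add_right (norm_sub_le _ _) _)
      _ ≤ 2 * tail * ‖g‖ + (δ + δ) := by
          apply add_le_add seg
          rw [exp_isometry A hA h e, exp_isometry _ hPAPsa h e]
          exact add_le_add henorm henorm
      _ ≤ 2 * q * (1 + δ) + 2 * δ := by
          have h1 : 2 * tail * ‖g‖ ≤ 2 * q * (1 + δ) := by
            apply mul_le_mul _ hgnorm (norm_nonneg g) (by positivity)
            linarith
          linarith
  -- telescope
  have tele : ‖NormedSpace.exp ((-(t : ℂ) * Complex.I) • A) Φ -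
      NormedSpace.exp ((-(t : ℂ) * Complex.I) • (P ∘L A ∘L P)) Φ‖ ≤
      (n : ℝ) * (2 * q * (1 + δ) + 2 * δ) := by
    rcases hW with hWA | hWP
    · rw [hWA] at key
      refine (telescope A (P ∘L A ∘L P) hPAPsa Φ n h t hth).trans ?_
      calc (∑ j ∈ Finset.range n,
            ‖NormedSpace.exp ((-(h:ℂ) * Complex.I) • A)
                (NormedSpace.exp ((-((j * h : ℝ):ℂ) * Complex.I) • A) Φ)
              - NormedSpace.exp ((-(h:ℂ) * Complex.I) • (P ∘L A ∘L P))
                (NormedSpace.exp ((-((j * h : ℝ):ℂ) * Complex.I) • A) Φ)‖)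
          ≤ ∑ j ∈ Finset.range n, (2 * q * (1 + δ) + 2 * δ) :=
            Finset.sum_le_sum (fun j hj => key j (Finset.mem_range.mp hj))
        _ = (n : ℝ) * (2 * q * (1 + δ) + 2 * δ) := by
            rw [Finset.sum_const, Finset.card_range, nsmul_eq_mul]
    · rw [hWP] at key
      rw [norm_sub_rev]
      refine (telescope (P ∘L A ∘L P) A hA Φ n h t hth).trans ?_
      calc (∑ j ∈ Finset.range n,
            ‖NormedSpace.exp ((-(h:ℂ) * Complex.I) • (P ∘L A ∘L P))
                (NormedSpace.exp ((-((j * h : ℝ):ℂ) * Complex.I) • (P ∘L A ∘L P)) Φ)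
              - NormedSpace.exp ((-(h:ℂ) * Complex.I) • A)
                (NormedSpace.exp ((-((j * h : ℝ):ℂ) * Complex.I) • (P ∘L A ∘L P)) Φ)‖)
          ≤ ∑ j ∈ Finset.range n, (2 * q * (1 + δ) + 2 * δ) := by
            apply Finset.sum_le_sum
            intro j hj
            rw [norm_sub_rev]
            exact key j (Finset.mem_range.mp hj)
        _ = (n : ℝ) * (2 * q * (1 + δ) + 2 * δ) := by
            rw [Finset.sum_const, Finset.card_range, nsmul_eq_mul]
  refine tele.trans ?_
  -- final arithmetic
  have hnle : (n : ℝ) ≤ arg + 1 := by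
    rw [hn]
    push_cast
    apply max_le
    · linarith
    · exact le_of_lt (Nat.ceil_lt_add_one harg0)
  have hfac : 4 * Real.exp 1 * ‖A‖ * t / N₀ + 2 = 2 * (arg + 1) := by
    rw [harg]; ring
  rw [hfac]
  have hpos2 : (0:ℝ) ≤ δ + q * (1 + δ) := by positivity
  calc (n : ℝ) * (2 * q * (1 + δ) + 2 * δ)
      = 2 * (n : ℝ) * (δ + q * (1 + δ)) := by ring
    _ ≤ 2 * (arg + 1) * (δ + q * (1 + δ)) := by
        apply mul_le_mul_of_nonneg_right _ hpos2
        linarith
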